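/- Let {(X_i, B_i, μ_i)} be a sequence of probability spaces, ω a non-principal ultrafilter on ℕ, and let θ_ω be the outer measure on the ultraproduct ∏_{i→ω} X_i defined by θ_ω(A) = inf{ Σ_n lim_{i→ω} μ_i(B_i^n) : A ⊆ ⋃_n [B_i^n]_ω, B_i^n ∈ B_i }. Then for every sequence of measurable sets B_i ∈ B_i, the ultraproduct set [B_i]_ω is θ_ω-measurable (Carathéodory measurable) and θ_ω([B_i]_ω) = lim_{i→ω} μ_i(B_i). -/

import Mathlib

open Filter MeasureTheory
open scoped ENNReal Topology

/-- The setoid on `∀ i, X i` identifying sequences that agree `ω`-almost everywhere. -/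
def ultraSetoid (ω : Ultrafilter ℕ) (X : ℕ → Type*) : Setoid (∀ i, X i) where
  r x y := {i | x i = y i} ∈ ω
  iseqv := by
    refine ⟨fun x => ?_, fun {x y} h => ?_, fun {x y z} hxy hyz => ?_⟩
    · have : {i | x i = x i} = Set.univ := by ext i; simp
      rw [this]; exact Filter.univ_mem
    · simpa only [eq_comm] using h
    · exact Filter.mem_of_superset (Filter.inter_mem hxy hyz)
        fun i hi => hi.1.trans hi.2

/-- The (set-theoretic) ultraproduct `∏_{i→ω} X i`. -/
def Ultraprod (ω : Ultrafilter ℕ) (X : ℕ → Type*) := Quotient (ultraSetoid ω X)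

/-- The subset `[B i]_ω` of the ultraproduct determined by a sequence of sets `B i ⊆ X i`:
classes of sequences lying in `B i` for `ω`-almost every `i`. -/
def classSet {X : ℕ → Type*} (ω : Ultrafilter ℕ) (B : ∀ i, Set (X i)) :
    Set (Ultraprod ω X) :=
  {q | ∃ x : ∀ i, X i, Quotient.mk (ultraSetoid ω X) x = q ∧ {i | x i ∈ B i} ∈ ω}

/-- The outer measure `θ_ω` on the ultraproduct: infimum of `∑_n lim_ω μ i (B n i)` over
countable covers of `A` by ultraproducts of measurable sets. -/
noncomputable def thetaOmega {X : ℕ → Type*} (ω : Ultrafilter ℕ)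
    [∀ i, MeasurableSpace (X i)] (μ : ∀ i, Measure (X i))
    (A : Set (Ultraprod ω X)) : ℝ≥0∞ :=
  ⨅ (B : ℕ → ∀ i, Set (X i)) (_ : ∀ n i, MeasurableSet (B n i))
    (_ : A ⊆ ⋃ n, classSet ω (B n)),
    ∑' n, limsup (fun i => μ i (B n i)) (ω : Filter ℕ)

section Aux

variable {X : ℕ → Type*} (ω : Ultrafilter ℕ)

lemma mem_classSet_mk (B : ∀ i, Set (X i)) (x : ∀ i, X i) :
    Quotient.mk (ultraSetoid ω X) x ∈ classSet ω B ↔ {i | x i ∈ B i} ∈ ω := by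
  constructor
  · rintro ⟨y, hy, hmem⟩
    have h : {i | y i = x i} ∈ ω := Quotient.exact hy
    refine Filter.mem_of_superset (Filter.inter_mem h hmem) fun i hi => ?_
    have h1 : y i = x i := hi.1
    have h2 : y i ∈ B i := hi.2
    show x i ∈ B i
    rwa [← h1]
  · intro h; exact ⟨x, rfl, h⟩

lemma classSet_inter (B C : ∀ i, Set (X i)) :
    classSet ω (fun i => B i ∩ C i) = classSet ω B ∩ classSet ω C := by
  ext q
  induction q using Quotient.inductionOn with
  | h x =>
    change (_ ∈ classSet ω fun i => B i ∩ C i) ↔ _ ∈ classSet ω B ∧ _ ∈ classSet ω C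
    refine (mem_classSet_mk ω _ x).trans (Iff.trans ?_
      (and_congr (mem_classSet_mk ω B x) (mem_classSet_mk ω C x)).symm)
    constructor
    · intro h
      exact ⟨Filter.mem_of_superset h fun i hi => hi.1,
        Filter.mem_of_superset h fun i hi => hi.2⟩
    · rintro ⟨h1, h2⟩
      exact Filter.mem_of_superset (Filter.inter_mem h1 h2) fun i hi => ⟨hi.1, hi.2⟩

lemma classSet_compl (B : ∀ i, Set (X i)) :
    classSet ω (fun i => (B i)ᶜ) = (classSet ω B)ᶜ := by
  ext q
  induction q using Quotient.inductionOn with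
  | h x =>
    change (_ ∈ classSet ω fun i => (B i)ᶜ) ↔ ¬ (_ ∈ classSet ω B)
    refine (mem_classSet_mk ω _ x).trans (Iff.trans ?_ (not_congr (mem_classSet_mk ω B x)).symm)
    rw [← Ultrafilter.compl_mem_iff_notMem]
    rfl

lemma tendsto_ultraLim (f : ℕ → ℝ≥0∞) : Tendsto f ω (𝓝 (limsup f ω)) := by
  obtain ⟨a, -, ha⟩ := isCompact_univ.ultrafilter_le_nhds (ω.map f)
    (le_principal_iff.2 Filter.univ_mem)
  have h : Tendsto f ω (𝓝 a) := by
    rw [Tendsto, ← Ultrafilter.coe_map]; exact ha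
  rwa [h.limsup_eq]

lemma ultraLim_add (f g : ℕ → ℝ≥0∞) :
    limsup (fun i => f i + g i) (ω : Filter ℕ)
      = limsup f (ω : Filter ℕ) + limsup g (ω : Filter ℕ) :=
  ((tendsto_ultraLim ω f).add (tendsto_ultraLim ω g)).limsup_eq

lemma ultraLim_sum (s : Finset ℕ) (f : ℕ → ℕ → ℝ≥0∞) :
    limsup (fun i => ∑ n ∈ s, f n i) (ω : Filter ℕ)
      = ∑ n ∈ s, limsup (f n) (ω : Filter ℕ) :=
  (tendsto_finset_sum s (fun n _ => tendsto_ultraLim ω (f n))).limsup_eq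

/-- Countable saturation: a countable cover of an internal set by internal sets
admits a finite subcover (on the level of index sets, `ω`-a.e.). -/
lemma exists_finite_subcover [∀ i, Nonempty (X i)] (hω : (ω : Filter ℕ) ≤ cofinite)
    (A : ∀ i, Set (X i)) (Bs : ℕ → ∀ i, Set (X i))
    (hsub : classSet ω A ⊆ ⋃ n, classSet ω (Bs n)) :
    ∃ N, {i | A i ⊆ ⋃ n ∈ Finset.range (N + 1), Bs n i} ∈ ω := by
  classical
  by_contra hcon
  push_neg at hcon
  set P : ℕ → ℕ → Prop := fun i N => ∃ x ∈ A i, ∀ n ≤ N, x ∉ Bs n i with hP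
  have hT : ∀ N, {i | P i N} ∈ ω := by
    intro N
    have h1 := hcon N
    rw [← Ultrafilter.compl_mem_iff_notMem] at h1
    refine Filter.mem_of_superset h1 ?_
    intro i hi
    rw [Set.mem_compl_iff, Set.mem_setOf_eq, Set.not_subset] at hi
    obtain ⟨y, hyA, hyU⟩ := hi
    refine ⟨y, hyA, fun n hn hyB => hyU ?_⟩
    exact Set.mem_biUnion (Finset.mem_range.2 (Nat.lt_succ_of_le hn)) hyB
  set x : ∀ i, X i := fun i =>
    if h : P i (Nat.findGreatest (P i) i) then h.choose else Classical.arbitrary (X i)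
    with hx
  have key : ∀ n i, n ≤ i → P i n → x i ∈ A i ∧ x i ∉ Bs n i := by
    intro n i hni hPi
    have hg : P i (Nat.findGreatest (P i) i) := Nat.findGreatest_spec hni hPi
    have hle : n ≤ Nat.findGreatest (P i) i := Nat.le_findGreatest hni hPi
    have hxi : x i = hg.choose := by rw [hx]; exact dif_pos hg
    rw [hxi]
    exact ⟨hg.choose_spec.1, hg.choose_spec.2 n hle⟩
  have hxA : Quotient.mk (ultraSetoid ω X) x ∈ classSet ω A := by
    rw [mem_classSet_mk]
    exact Filter.mem_of_superset (hT 0) (fun i hi => (key 0 i (Nat.zero_le i) hi).1)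
  have hxB : ∀ n, Quotient.mk (ultraSetoid ω X) x ∉ classSet ω (Bs n) := by
    intro n
    rw [mem_classSet_mk, ← Ultrafilter.compl_mem_iff_notMem]
    have hIci : Set.Ici n ∈ (ω : Filter ℕ) := by
      refine hω ?_
      rw [Filter.mem_cofinite, Set.compl_Ici]
      exact Set.finite_Iio n
    refine Filter.mem_of_superset (Filter.inter_mem (hT n) hIci) ?_
    rintro i ⟨hPi, hni⟩
    exact (key n i hni hPi).2
  obtain ⟨n, hn⟩ := Set.mem_iUnion.1 (hsub hxA)
  exact hxB n hn

variable [∀ i, MeasurableSpace (X i)] (μ : ∀ i, Measure (X i))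

lemma theta_le_cover (A : Set (Ultraprod ω X)) (Bs : ℕ → ∀ i, Set (X i))
    (hm : ∀ n i, MeasurableSet (Bs n i)) (hc : A ⊆ ⋃ n, classSet ω (Bs n)) :
    thetaOmega ω μ A ≤ ∑' n, limsup (fun i => μ i (Bs n i)) (ω : Filter ℕ) :=
  iInf_le_of_le Bs (iInf_le_of_le hm (iInf_le _ hc))

lemma theta_classSet_le (B : ∀ i, Set (X i)) (hB : ∀ i, MeasurableSet (B i)) :
    thetaOmega ω μ (classSet ω B) ≤ limsup (fun i => μ i (B i)) (ω : Filter ℕ) := by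
  classical
  set Bs : ℕ → ∀ i, Set (X i) := fun n => if n = 0 then B else fun _ => ∅ with hBs
  have hm : ∀ n i, MeasurableSet (Bs n i) := by
    intro n i
    by_cases h : n = 0 <;> simp [hBs, h, hB i]
  have hc : classSet ω B ⊆ ⋃ n, classSet ω (Bs n) := fun q hq =>
    Set.mem_iUnion.2 ⟨0, by simpa [hBs] using hq⟩
  refine le_trans (theta_le_cover ω μ _ Bs hm hc) ?_
  rw [tsum_eq_single 0 ?_]
  · simp [hBs]
  · intro n hn
    simp [hBs, if_neg hn, measure_empty, limsup_const]

lemma theta_classSet_ge [∀ i, Nonempty (X i)] (hω : (ω : Filter ℕ) ≤ cofinite)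
    (A : ∀ i, Set (X i)) :
    limsup (fun i => μ i (A i)) (ω : Filter ℕ) ≤ thetaOmega ω μ (classSet ω A) := by
  refine le_iInf fun Bs => le_iInf fun hm => le_iInf fun hc => ?_
  obtain ⟨N, hN⟩ := exists_finite_subcover ω hω A Bs hc
  calc limsup (fun i => μ i (A i)) (ω : Filter ℕ)
      ≤ limsup (fun i => ∑ n ∈ Finset.range (N + 1), μ i (Bs n i)) (ω : Filter ℕ) := by
        refine limsup_le_limsup ?_
        filter_upwards [hN] with i hi
        calc μ i (A i) ≤ μ i (⋃ n ∈ Finset.range (N + 1), Bs n i) := measure_mono hi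
          _ ≤ ∑ n ∈ Finset.range (N + 1), μ i (Bs n i) := measure_biUnion_finset_le _ _
    _ = ∑ n ∈ Finset.range (N + 1), limsup (fun i => μ i (Bs n i)) (ω : Filter ℕ) :=
        ultraLim_sum ω _ _
    _ ≤ ∑' n, limsup (fun i => μ i (Bs n i)) (ω : Filter ℕ) := ENNReal.sum_le_tsum _

end Aux

/-- for every sequence of measurable sets `B i`, the ultraproduct set
`[B i]_ω` is Carathéodory measurable for the outer measure `θ_ω`, and
`θ_ω([B i]_ω) = lim_ω μ i (B i)`. -/
theorem classSet_caratheodory_and_measure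
    {X : ℕ → Type*} [∀ i, MeasurableSpace (X i)] (μ : ∀ i, Measure (X i))
    [∀ i, IsProbabilityMeasure (μ i)]
    (ω : Ultrafilter ℕ) (hω : (ω : Filter ℕ) ≤ cofinite)
    (B : ∀ i, Set (X i)) (hB : ∀ i, MeasurableSet (B i)) :
    (∀ C : Set (Ultraprod ω X),
      thetaOmega ω μ (C ∩ classSet ω B) + thetaOmega ω μ (C ∩ (classSet ω B)ᶜ) ≤
        thetaOmega ω μ C) ∧
    thetaOmega ω μ (classSet ω B) = limsup (fun i => μ i (B i)) (ω : Filter ℕ) := by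
  haveI : ∀ i, Nonempty (X i) := fun i => Measure.nonempty_of_neZero (μ i)
  constructor
  · intro C
    refine le_iInf fun Bs => le_iInf fun hm => le_iInf fun hc => ?_
    have h1 : thetaOmega ω μ (C ∩ classSet ω B)
        ≤ ∑' n, limsup (fun i => μ i (Bs n i ∩ B i)) (ω : Filter ℕ) := by
      refine theta_le_cover ω μ _ _ (fun n i => (hm n i).inter (hB i)) ?_
      intro q hq
      obtain ⟨n, hn⟩ := Set.mem_iUnion.1 (hc hq.1)
      refine Set.mem_iUnion.2 ⟨n, ?_⟩
      rw [classSet_inter]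
      exact ⟨hn, hq.2⟩
    have h2 : thetaOmega ω μ (C ∩ (classSet ω B)ᶜ)
        ≤ ∑' n, limsup (fun i => μ i (Bs n i ∩ (B i)ᶜ)) (ω : Filter ℕ) := by
      refine theta_le_cover ω μ _ _ (fun n i => (hm n i).inter (hB i).compl) ?_
      intro q hq
      obtain ⟨n, hn⟩ := Set.mem_iUnion.1 (hc hq.1)
      refine Set.mem_iUnion.2 ⟨n, ?_⟩
      rw [classSet_inter, classSet_compl]
      exact ⟨hn, hq.2⟩
    calc thetaOmega ω μ (C ∩ classSet ω B) + thetaOmega ω μ (C ∩ (classSet ω B)ᶜ)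
        ≤ (∑' n, limsup (fun i => μ i (Bs n i ∩ B i)) (ω : Filter ℕ))
          + ∑' n, limsup (fun i => μ i (Bs n i ∩ (B i)ᶜ)) (ω : Filter ℕ) :=
          add_le_add h1 h2
      _ = ∑' n, (limsup (fun i => μ i (Bs n i ∩ B i)) (ω : Filter ℕ)
          + limsup (fun i => μ i (Bs n i ∩ (B i)ᶜ)) (ω : Filter ℕ)) :=
          ENNReal.tsum_add.symm
      _ = ∑' n, limsup (fun i => μ i (Bs n i)) (ω : Filter ℕ) := by
          refine tsum_congr fun n => ?_
          rw [← ultraLim_add]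
          have hfun : (fun i => μ i (Bs n i ∩ B i) + μ i (Bs n i ∩ (B i)ᶜ))
              = fun i => μ i (Bs n i) := by
            funext i
            rw [← Set.diff_eq, measure_inter_add_diff _ (hB i)]
          rw [hfun]
  · exact le_antisymm (theta_classSet_le ω μ B hB) (theta_classSet_ge ω μ hω B)
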